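/- arXiv:1808.03808 — 3 statements merged into one kernel-verified Lean document; each statement's English description precedes it below -/
import Mathlib

section
/- Define the Peirce symbol 𝔇(T;a,b,p) on complete binary trees by 𝔇(leaf;a,b,p) = 0 and 𝔇(T1∘T2;a,b,p) = p·(𝔇(T1;a,b,p)+𝔇(T2;a,b,p)) + ρ(T1,a)ρ(T2,b) + ρ(T1,b)ρ(T2,a). Then for every tree T, (p−a)·𝔇(T;a,1/2,p) = ρ(T,p) − ρ(T,a). -/
inductive BTree : Type
  | leaf : BTree
  | node : BTree → BTree → BTree

def BTree.rho {R : Type*} [CommSemiring R] (q : R) : BTree → R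
  | .leaf => 1
  | .node l r => q * (l.rho q + r.rho q)

def BTree.leaves : BTree → ℕ
  | .leaf => 1
  | .node l r => l.leaves + r.leaves


/-- The Peirce symbol of a tree. -/
def BTree.psym {R : Type*} [CommSemiring R] (a b p : R) : BTree → R
  | .leaf => 0
  | .node l r => p * (l.psym a b p + r.psym a b p)
      + l.rho a * r.rho b + l.rho b * r.rho a

lemma rho_half (F : Type*) [Field F] (h2 : (2 : F) ≠ 0) (T : BTree) :
    T.rho ((2 : F)⁻¹) = 1 := by
  induction T with
  | leaf => rfl
  | node l r hl hr => rw [BTree.rho, hl, hr]; field_simp; ring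

theorem psym_at_half (F : Type*) [Field F] (h2 : (2 : F) ≠ 0)
    (T : BTree) (a p : F) :
    (p - a) * T.psym a ((2 : F)⁻¹) p = T.rho p - T.rho a := by
  induction T with
  | leaf => simp [BTree.psym, BTree.rho]
  | node l r hl hr =>
    simp only [BTree.psym, BTree.rho, rho_half F h2]
    ring_nf
    ring_nf at hl hr
    linear_combination p * hl + p * hr
end

section
/- For plenary power trees S_{n+1} (S_1 = leaf, S_{k+1} = S_k ∘ S_k) and the Peirce symbol 𝔇 defined recursively by 𝔇(leaf;a,b,p)=0 and 𝔇(T1∘T2;a,b,p)=p(𝔇(T1)+𝔇(T2))+ρ(T1,a)ρ(T2,b)+ρ(T1,b)ρ(T2,a), there holds (p−2ab)·𝔇(S_{n+1};a,b,p) = 2^n·(p^n − (2ab)^n) for all n ≥ 0. -/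
def plen : ℕ → BTree
  | 0 => .leaf
  | n + 1 => .node (plen n) (plen n)

lemma rho_plen {R : Type*} [CommSemiring R] (q : R) (n : ℕ) :
    (plen n).rho q = (2 * q) ^ n := by
  induction n with
  | zero => simp [plen, BTree.rho]
  | succ n ih => simp [plen, BTree.rho, ih, pow_succ]; ring

theorem psym_plenary (R : Type*) [CommRing R] (a b p : R) (n : ℕ) :
    (p - 2 * a * b) * (plen n).psym a b p = 2 ^ n * (p ^ n - (2 * a * b) ^ n) := by
  induction n with
  | zero => simp [plen, BTree.psym]
  | succ n ih =>
    have h : (p - 2 * a * b) * (plen (n+1)).psym a b p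
        = 2 * p * ((p - 2 * a * b) * (plen n).psym a b p)
          + (p - 2 * a * b) * ((2*a)^n * (2*b)^n + (2*b)^n * (2*a)^n) := by
      simp only [plen, BTree.psym, rho_plen]; ring
    rw [h, ih]
    have : (2*a)^n * (2*b)^n = (2*(a*b))^n * 2^n := by
      rw [mul_pow, mul_pow, mul_pow]; ring
    rw [this]
    ring_nf
end

section
/- Let A be a commutative nonassociative algebra over a field F of characteristic ≠ 2,3 satisfying the Jordan-type identity x·x^3 = x^2·x^2 for all x ∈ A (principal powers). Let c be a nonzero idempotent and suppose y ∈ A satisfies c·y = λy with y not a scalar multiple of c and (the span of c and y has dimension 2, A torsion-free). Then λ(2λ−1)(λ−1) = 0, i.e., λ ∈ {0, 1/2, 1}. -/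
/-- In a commutative algebra satisfying the Jordan-type identity `x·x³ = x²·x²`,
the eigenvalue of an idempotent on an eigenvector independent of it satisfies
`λ(2λ−1)(λ−1) = 0`. -/
theorem jordan_identity_peirce_spectrum
    (F : Type*) [Field F] (h2 : (2 : F) ≠ 0) (h3 : (3 : F) ≠ 0)
    (A : Type*) [AddCommGroup A] [Module F A]
    (mul : A →ₗ[F] A →ₗ[F] A) (hcomm : ∀ x y : A, mul x y = mul y x)
    (hJordan : ∀ x : A, mul x (mul x (mul x x)) = mul (mul x x) (mul x x))
    (c : A) (hc : mul c c = c) (hc0 : c ≠ 0)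
    (y : A) (lam : F) (hy : mul c y = lam • y)
    (hind : LinearIndependent F ![c, y]) :
    lam * (2 * lam - 1) * (lam - 1) = 0 := by
  have hyc : mul y c = lam • y := by rw [hcomm]; exact hy
  have h1 := hJordan (c + y)
  have hm1 := hJordan (c - y)
  have h2' := hJordan (c + (2:F) • y)
  have hm2 := hJordan (c - (2:F) • y)
  simp only [map_add, map_sub, LinearMap.add_apply, LinearMap.sub_apply, map_smul,
    LinearMap.smul_apply, hc, hy, hyc, smul_add, smul_sub, smul_smul] at h1 hm1 h2' hm2
  have key : ((12:F) * (lam * (2 * lam - 1) * (lam - 1))) • y = 0 := by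
    linear_combination (norm := module) (8:F) • h1 - (8:F) • hm1 - h2' + hm2
  have hy0 : y ≠ 0 := by
    have := hind.ne_zero 1
    simpa using this
  have h12 : (12:F) ≠ 0 := by
    have : (12:F) = 2*2*3 := by norm_num
    rw [this]; exact mul_ne_zero (mul_ne_zero h2 h2) h3
  rcases smul_eq_zero.mp key with h | h
  · rcases mul_eq_zero.mp h with h | h
    · exact absurd h h12
    · exact h
  · exact absurd h hy0
end
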